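/- Let U, V be d×d unitary matrices and S a positive semi-definite Hermitian matrix. Set P = ((U+V)/2) S ((U+V)/2)ᴴ and E = ((U−V)/2) S ((U−V)/2)ᴴ. Then the smallest eigenvalue satisfies λ_min(S) ≤ λ_min(P) + ‖E‖_op, and for all k, λ_k(S) ≤ 2(λ_k(P) + ‖E‖_op). -/

import Mathlib

open Matrix
open scoped ComplexOrder
open scoped InnerProductSpace

/-- The `k`-th largest entry of a tuple of reals. -/
noncomputable def kthLargest {d : ℕ} (f : Fin d → ℝ) (k : Fin d) : ℝ :=
  (f ∘ Tuple.sort f) k.rev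

/-- The operator (spectral) norm of a complex matrix, acting on Euclidean space. -/
noncomputable def opNorm {d : ℕ} (A : Matrix (Fin d) (Fin d) ℂ) : ℝ :=
  ‖(Matrix.toEuclideanCLM (𝕜 := ℂ) A : EuclideanSpace ℂ (Fin d) →L[ℂ] EuclideanSpace ℂ (Fin d))‖

namespace Stmt3Aux

variable {d : ℕ}

noncomputable def qf (M : Matrix (Fin d) (Fin d) ℂ) (x : EuclideanSpace ℂ (Fin d)) : ℝ :=
  (inner ℂ x (Matrix.toEuclideanCLM (𝕜 := ℂ) M x) : ℂ).re

lemma clm_eigen {M : Matrix (Fin d) (Fin d) ℂ} (hM : M.IsHermitian) (i : Fin d) :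
    Matrix.toEuclideanCLM (𝕜 := ℂ) M (hM.eigenvectorBasis i)
      = (hM.eigenvalues i : ℂ) • hM.eigenvectorBasis i := by
  have h := hM.mulVec_eigenvectorBasis i
  ext j
  have := congrFun h j
  simpa [Matrix.ofLp_toEuclideanCLM, Pi.smul_apply] using this

lemma re_mul_conj (μ : ℝ) (z : ℂ) : (z * ((μ:ℂ) * (starRingEnd ℂ) z)).re = μ * ‖z‖ ^ 2 := by
  have : z * ((μ:ℂ) * (starRingEnd ℂ) z) = (μ:ℂ) * (z * (starRingEnd ℂ) z) := by ring
  rw [this, Complex.mul_conj, ← Complex.ofReal_mul, Complex.ofReal_re,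
    Complex.normSq_eq_norm_sq]

lemma qf_expand {M : Matrix (Fin d) (Fin d) ℂ} (hM : M.IsHermitian)
    (x : EuclideanSpace ℂ (Fin d)) :
    qf M x = ∑ i, hM.eigenvalues i * ‖(⟪hM.eigenvectorBasis i, x⟫_ℂ)‖ ^ 2 := by
  classical
  have hx : (Matrix.toEuclideanCLM (𝕜 := ℂ) M) x
      = ∑ i, ⟪hM.eigenvectorBasis i, x⟫_ℂ • ((hM.eigenvalues i : ℂ) • hM.eigenvectorBasis i) := by
    conv_lhs => rw [← hM.eigenvectorBasis.sum_repr' x]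
    rw [map_sum]
    exact Finset.sum_congr rfl fun i _ => by
      rw [(Matrix.toEuclideanCLM (𝕜 := ℂ) M).map_smul, clm_eigen hM i]
  rw [qf, hx, inner_sum, Complex.re_sum]
  refine Finset.sum_congr rfl fun i _ => ?_
  rw [inner_smul_right, inner_smul_right, ← inner_conj_symm x]
  exact re_mul_conj _ _

lemma norm_sq_expand {M : Matrix (Fin d) (Fin d) ℂ} (hM : M.IsHermitian)
    (x : EuclideanSpace ℂ (Fin d)) :
    ‖x‖ ^ 2 = ∑ i, ‖(⟪hM.eigenvectorBasis i, x⟫_ℂ)‖ ^ 2 := by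
  have h := hM.eigenvectorBasis.sum_inner_mul_inner x x
  have h2 : (⟪x, x⟫_ℂ).re = ‖x‖ ^ 2 := by
    rw [inner_self_eq_norm_sq_to_K]
    norm_cast
  rw [← h2, ← h, Complex.re_sum]
  refine Finset.sum_congr rfl fun i _ => ?_
  rw [← inner_conj_symm x, mul_comm, Complex.mul_conj, Complex.ofReal_re,
    Complex.normSq_eq_norm_sq]




lemma inner_eq_zero_of_span {M : Matrix (Fin d) (Fin d) ℂ} (hM : M.IsHermitian)
    (s : Finset (Fin d)) {j : Fin d} (hj : j ∉ s) {x : EuclideanSpace ℂ (Fin d)}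
    (hx : x ∈ Submodule.span ℂ (hM.eigenvectorBasis '' ↑s)) :
    ⟪hM.eigenvectorBasis j, x⟫_ℂ = 0 := by
  induction hx using Submodule.span_induction with
  | mem y hy =>
    obtain ⟨i, hi, rfl⟩ := hy
    exact hM.eigenvectorBasis.orthonormal.2 (fun h => hj (h ▸ hi))
  | zero => simp
  | add y z _ _ hy hz => rw [inner_add_right, hy, hz, add_zero]
  | smul a y _ hy => rw [inner_smul_right, hy, mul_zero]

lemma qf_le_on_span {M : Matrix (Fin d) (Fin d) ℂ} (hM : M.IsHermitian)
    (s : Finset (Fin d)) (c : ℝ) (hc : ∀ j ∈ s, hM.eigenvalues j ≤ c)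
    {x : EuclideanSpace ℂ (Fin d)}
    (hx : x ∈ Submodule.span ℂ (hM.eigenvectorBasis '' ↑s)) :
    qf M x ≤ c * ‖x‖ ^ 2 := by
  rw [qf_expand hM, norm_sq_expand hM, Finset.mul_sum]
  refine Finset.sum_le_sum fun i _ => ?_
  by_cases hi : i ∈ s
  · exact mul_le_mul_of_nonneg_right (hc i hi) (by positivity)
  · rw [inner_eq_zero_of_span hM s hi hx]; simp

lemma qf_ge_on_span {M : Matrix (Fin d) (Fin d) ℂ} (hM : M.IsHermitian)
    (s : Finset (Fin d)) (c : ℝ) (hc : ∀ j ∈ s, c ≤ hM.eigenvalues j)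
    {x : EuclideanSpace ℂ (Fin d)}
    (hx : x ∈ Submodule.span ℂ (hM.eigenvectorBasis '' ↑s)) :
    c * ‖x‖ ^ 2 ≤ qf M x := by
  rw [qf_expand hM, norm_sq_expand hM, Finset.mul_sum]
  refine Finset.sum_le_sum fun i _ => ?_
  by_cases hi : i ∈ s
  · exact mul_le_mul_of_nonneg_right (hc i hi) (by positivity)
  · rw [inner_eq_zero_of_span hM s hi hx]; simp

lemma finrank_span_eigen {M : Matrix (Fin d) (Fin d) ℂ} (hM : M.IsHermitian)
    (s : Finset (Fin d)) :
    Module.finrank ℂ (Submodule.span ℂ (hM.eigenvectorBasis '' ↑s)) = s.card := by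
  classical
  have hli : LinearIndependent ℂ (fun i : (↑s : Set (Fin d)) => hM.eigenvectorBasis i) :=
    (hM.eigenvectorBasis.orthonormal.linearIndependent).comp Subtype.val Subtype.val_injective
  have himg : hM.eigenvectorBasis '' ↑s = Set.range (fun i : (↑s : Set (Fin d)) => hM.eigenvectorBasis i) := by
    rw [Set.image_eq_range]
  rw [himg, finrank_span_eq_card hli]
  simp

lemma exists_ne_zero_mem_inf (W₁ W₂ : Submodule ℂ (EuclideanSpace ℂ (Fin d)))
    (h : d < Module.finrank ℂ W₁ + Module.finrank ℂ W₂) :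
    ∃ x : EuclideanSpace ℂ (Fin d), x ≠ 0 ∧ x ∈ W₁ ∧ x ∈ W₂ := by
  have hsum := Submodule.finrank_sup_add_finrank_inf_eq W₁ W₂
  have hle : Module.finrank ℂ ↥(W₁ ⊔ W₂) ≤ d := by
    have := Submodule.finrank_le (W₁ ⊔ W₂)
    simpa [finrank_euclideanSpace] using this
  have hpos : 0 < Module.finrank ℂ ↥(W₁ ⊓ W₂) := by omega
  obtain ⟨x, hx⟩ := Module.finrank_pos_iff_exists_ne_zero.mp hpos
  exact ⟨x, fun h0 => hx (Subtype.ext h0), x.2.1, x.2.2⟩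

lemma kthLargest_ge {M : Matrix (Fin d) (Fin d) ℂ} (hM : M.IsHermitian) (k : Fin d)
    (c : ℝ) (W : Submodule ℂ (EuclideanSpace ℂ (Fin d)))
    (hrank : k.val + 1 ≤ Module.finrank ℂ W)
    (hq : ∀ x ∈ W, c * ‖x‖ ^ 2 ≤ qf M x) :
    c ≤ kthLargest hM.eigenvalues k := by
  classical
  set μ := hM.eigenvalues with hμ
  set σ := Tuple.sort μ with hσ
  set r := k.rev with hr
  have hrval : (r : ℕ) = d - (k.val + 1) := rfl
  set s : Finset (Fin d) := Finset.image σ (Finset.Iic r) with hs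
  have hcard : s.card = (r : ℕ) + 1 := by
    rw [hs, Finset.card_image_of_injective _ σ.injective, Fin.card_Iic]
  have hbound : ∀ j ∈ s, μ j ≤ kthLargest μ k := by
    intro j hj
    obtain ⟨i, hi, rfl⟩ := Finset.mem_image.mp hj
    exact Tuple.monotone_sort μ (Finset.mem_Iic.mp hi)
  set W' := Submodule.span ℂ (hM.eigenvectorBasis '' ↑s) with hW'
  have hrankW' : Module.finrank ℂ W' = (r : ℕ) + 1 := by
    rw [hW', finrank_span_eigen hM s, hcard]
  obtain ⟨x, hx0, hxW, hxW'⟩ := exists_ne_zero_mem_inf W W' (by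
    have hk := k.isLt
    omega)
  have h1 := hq x hxW
  have h2 : qf M x ≤ kthLargest μ k * ‖x‖ ^ 2 := qf_le_on_span hM s _ hbound hxW'
  have hx2 : (0:ℝ) < ‖x‖ ^ 2 := pow_pos (norm_pos_iff.mpr hx0) 2
  nlinarith



lemma qf_add (M N : Matrix (Fin d) (Fin d) ℂ) (x : EuclideanSpace ℂ (Fin d)) :
    qf (M + N) x = qf M x + qf N x := by
  unfold qf
  rw [map_add, ContinuousLinearMap.add_apply, inner_add_right, Complex.add_re]

lemma qf_half_smul (M : Matrix (Fin d) (Fin d) ℂ) (x : EuclideanSpace ℂ (Fin d)) :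
    qf (((1:ℂ)/2) • M) x = (1/2 : ℝ) * qf M x := by
  unfold qf
  rw [_root_.map_smul, ContinuousLinearMap.smul_apply, inner_smul_right]
  have : ((1:ℂ)/2) = ((1/2 : ℝ) : ℂ) := by norm_num
  rw [this, Complex.re_ofReal_mul]

lemma qf_conj (W N : Matrix (Fin d) (Fin d) ℂ) (x : EuclideanSpace ℂ (Fin d)) :
    qf (W * N * Wᴴ) x = qf N (Matrix.toEuclideanCLM (𝕜 := ℂ) Wᴴ x) := by
  unfold qf
  have hW : (Matrix.toEuclideanCLM (𝕜 := ℂ) Wᴴ)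
      = ContinuousLinearMap.adjoint (Matrix.toEuclideanCLM (𝕜 := ℂ) W) := by
    rw [← Matrix.star_eq_conjTranspose, map_star, ContinuousLinearMap.star_eq_adjoint]
  rw [_root_.map_mul, _root_.map_mul]
  simp only [ContinuousLinearMap.mul_apply]
  rw [hW, ← ContinuousLinearMap.adjoint_inner_left]

lemma norm_sq_conjT {U : Matrix (Fin d) (Fin d) ℂ} (hU : U ∈ Matrix.unitaryGroup (Fin d) ℂ)
    (x : EuclideanSpace ℂ (Fin d)) :
    ‖Matrix.toEuclideanCLM (𝕜 := ℂ) Uᴴ x‖ ^ 2 = ‖x‖ ^ 2 := by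
  have hW : (Matrix.toEuclideanCLM (𝕜 := ℂ) Uᴴ)
      = ContinuousLinearMap.adjoint (Matrix.toEuclideanCLM (𝕜 := ℂ) U) := by
    rw [← Matrix.star_eq_conjTranspose, map_star, ContinuousLinearMap.star_eq_adjoint]
  have h1 : U * Uᴴ = 1 := by
    rw [← Matrix.star_eq_conjTranspose]
    exact Matrix.mem_unitaryGroup_iff.mp hU
  have key : (⟪Matrix.toEuclideanCLM (𝕜 := ℂ) Uᴴ x, Matrix.toEuclideanCLM (𝕜 := ℂ) Uᴴ x⟫_ℂ)
      = ⟪x, x⟫_ℂ := by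
    nth_rewrite 1 [hW]
    rw [ContinuousLinearMap.adjoint_inner_left]
    have : (Matrix.toEuclideanCLM (𝕜 := ℂ) U) (Matrix.toEuclideanCLM (𝕜 := ℂ) Uᴴ x)
        = (Matrix.toEuclideanCLM (𝕜 := ℂ) (U * Uᴴ)) x := by
      rw [_root_.map_mul]; rfl
    rw [this, h1, _root_.map_one, ContinuousLinearMap.one_apply]
  rw [← inner_self_eq_norm_sq (𝕜 := ℂ), ← inner_self_eq_norm_sq (𝕜 := ℂ), key]

lemma abs_qf_le (M : Matrix (Fin d) (Fin d) ℂ) (x : EuclideanSpace ℂ (Fin d)) :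
    |qf M x| ≤ ‖Matrix.toEuclideanCLM (𝕜 := ℂ) M‖ * ‖x‖ ^ 2 := by
  unfold qf
  calc |(⟪x, Matrix.toEuclideanCLM (𝕜 := ℂ) M x⟫_ℂ).re|
      ≤ ‖(⟪x, Matrix.toEuclideanCLM (𝕜 := ℂ) M x⟫_ℂ)‖ := Complex.abs_re_le_norm _
    _ ≤ ‖x‖ * ‖Matrix.toEuclideanCLM (𝕜 := ℂ) M x‖ := norm_inner_le_norm _ _
    _ ≤ ‖x‖ * (‖Matrix.toEuclideanCLM (𝕜 := ℂ) M‖ * ‖x‖) := by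
        exact mul_le_mul_of_nonneg_left ((Matrix.toEuclideanCLM (𝕜 := ℂ) M).le_opNorm x)
          (norm_nonneg _)
    _ = ‖Matrix.toEuclideanCLM (𝕜 := ℂ) M‖ * ‖x‖ ^ 2 := by ring

lemma qf_nonneg_of_psd {S : Matrix (Fin d) (Fin d) ℂ} (hS : S.PosSemidef)
    (x : EuclideanSpace ℂ (Fin d)) : 0 ≤ qf S x := by
  rw [qf_expand hS.1]
  exact Finset.sum_nonneg fun i _ =>
    mul_nonneg (hS.eigenvalues_nonneg i) (by positivity)

lemma qf_ge_inf {M : Matrix (Fin d) (Fin d) ℂ} (hM : M.IsHermitian)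
    (x : EuclideanSpace ℂ (Fin d)) :
    (⨅ j, hM.eigenvalues j) * ‖x‖ ^ 2 ≤ qf M x := by
  rw [qf_expand hM, norm_sq_expand hM, Finset.mul_sum]
  refine Finset.sum_le_sum fun i _ => ?_
  exact mul_le_mul_of_nonneg_right (ciInf_le (Set.Finite.bddBelow (Set.finite_range _)) i)
    (by positivity)

lemma qf_eigen {M : Matrix (Fin d) (Fin d) ℂ} (hM : M.IsHermitian) (j : Fin d) :
    qf M (hM.eigenvectorBasis j) = hM.eigenvalues j := by
  unfold qf
  rw [clm_eigen hM j, inner_smul_right, inner_self_eq_norm_sq_to_K]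
  have : ‖hM.eigenvectorBasis j‖ = 1 := hM.eigenvectorBasis.orthonormal.1 j
  rw [this]
  norm_num


lemma conjT_apply_apply {U : Matrix (Fin d) (Fin d) ℂ} (hU : U ∈ Matrix.unitaryGroup (Fin d) ℂ)
    (x : EuclideanSpace ℂ (Fin d)) :
    Matrix.toEuclideanCLM (𝕜 := ℂ) Uᴴ (Matrix.toEuclideanCLM (𝕜 := ℂ) U x) = x := by
  have h1 : star U * U = 1 := Matrix.mem_unitaryGroup_iff'.mp hU
  have h2 : Matrix.toEuclideanCLM (𝕜 := ℂ) Uᴴ (Matrix.toEuclideanCLM (𝕜 := ℂ) U x)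
      = Matrix.toEuclideanCLM (𝕜 := ℂ) (Uᴴ * U) x := by
    rw [_root_.map_mul]; rfl
  rw [h2, ← Matrix.star_eq_conjTranspose, h1, _root_.map_one, ContinuousLinearMap.one_apply]

end Stmt3Aux

open Stmt3Aux in
/-- With `P = ((U+V)/2) S ((U+V)/2)ᴴ` and `E = ((U−V)/2) S ((U−V)/2)ᴴ` for unitary `U, V`
and PSD Hermitian `S`: `λ_min(S) ≤ λ_min(P) + ‖E‖_op` and `λ_k(S) ≤ 2(λ_k(P) + ‖E‖_op)`. -/
theorem stmt3 {d : ℕ} (U V S : Matrix (Fin d) (Fin d) ℂ)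
    (hU : U ∈ Matrix.unitaryGroup (Fin d) ℂ) (hV : V ∈ Matrix.unitaryGroup (Fin d) ℂ)
    (hS : S.PosSemidef)
    (hP : ((((1 : ℂ) / 2) • (U + V)) * S * (((1 : ℂ) / 2) • (U + V))ᴴ).IsHermitian) :
    (⨅ k, hS.1.eigenvalues k) ≤ (⨅ k, hP.eigenvalues k) +
        opNorm ((((1 : ℂ) / 2) • (U - V)) * S * (((1 : ℂ) / 2) • (U - V))ᴴ) ∧
      ∀ k, kthLargest hS.1.eigenvalues k ≤
        2 * (kthLargest hP.eigenvalues k +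
          opNorm ((((1 : ℂ) / 2) • (U - V)) * S * (((1 : ℂ) / 2) • (U - V))ᴴ)) := by
  classical
  set A := ((1:ℂ)/2) • (U + V) with hA
  set B := ((1:ℂ)/2) • (U - V) with hB
  have hkey : A * S * Aᴴ + B * S * Bᴴ
      = ((1:ℂ)/2) • (U * S * Uᴴ) + ((1:ℂ)/2) • (V * S * Vᴴ) := by
    have h2 : star ((1:ℂ)/2) = (1:ℂ)/2 := by norm_num
    rw [hA, hB]
    simp only [conjTranspose_smul, conjTranspose_add, conjTranspose_sub, h2,
      Matrix.smul_mul, Matrix.mul_smul, Matrix.add_mul, Matrix.mul_add,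
      Matrix.sub_mul, Matrix.mul_sub, smul_smul]
    module
  have hQf : ∀ x : EuclideanSpace ℂ (Fin d), qf (A*S*Aᴴ) x + qf (B*S*Bᴴ) x
      = (1/2:ℝ) * qf (U*S*Uᴴ) x + (1/2:ℝ) * qf (V*S*Vᴴ) x := by
    intro x
    rw [← qf_add, hkey, qf_add, qf_half_smul, qf_half_smul]
  have hopn : opNorm (B*S*Bᴴ) = ‖Matrix.toEuclideanCLM (𝕜 := ℂ) (B*S*Bᴴ)‖ := rfl
  have hQbd : ∀ x : EuclideanSpace ℂ (Fin d),
      |qf (B*S*Bᴴ) x| ≤ opNorm (B*S*Bᴴ) * ‖x‖^2 := by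
    intro x; rw [hopn]; exact abs_qf_le _ x
  have hopnn : 0 ≤ opNorm (B*S*Bᴴ) := by rw [hopn]; exact norm_nonneg _
  constructor
  · rcases isEmpty_or_nonempty (Fin d) with hd | hd
    · have h1 : (⨅ k, hS.1.eigenvalues k) = 0 := by
        rw [iInf_of_isEmpty]; exact Real.sInf_empty
      have h2 : (⨅ k, hP.eigenvalues k) = 0 := by
        rw [iInf_of_isEmpty]; exact Real.sInf_empty
      rw [h1, h2, zero_add]
      exact hopnn
    · obtain ⟨j₀, hj₀⟩ := exists_eq_ciInf_of_finite (f := hP.eigenvalues)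
      have hv1 : ‖hP.eigenvectorBasis j₀‖ = 1 := hP.eigenvectorBasis.orthonormal.1 j₀
      set v := hP.eigenvectorBasis j₀ with hv
      have hU2 : ‖Matrix.toEuclideanCLM (𝕜 := ℂ) Uᴴ v‖^2 = 1 := by
        rw [norm_sq_conjT hU, hv1]; norm_num
      have hV2 : ‖Matrix.toEuclideanCLM (𝕜 := ℂ) Vᴴ v‖^2 = 1 := by
        rw [norm_sq_conjT hV, hv1]; norm_num
      have l1 : (⨅ k, hS.1.eigenvalues k) ≤ qf (U*S*Uᴴ) v := by
        have h := qf_ge_inf hS.1 (Matrix.toEuclideanCLM (𝕜 := ℂ) Uᴴ v)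
        rw [hU2, mul_one] at h
        rw [qf_conj]
        exact h
      have l2 : (⨅ k, hS.1.eigenvalues k) ≤ qf (V*S*Vᴴ) v := by
        have h := qf_ge_inf hS.1 (Matrix.toEuclideanCLM (𝕜 := ℂ) Vᴴ v)
        rw [hV2, mul_one] at h
        rw [qf_conj]
        exact h
      have l3 : qf (A*S*Aᴴ) v = ⨅ k, hP.eigenvalues k := by
        rw [hv, qf_eigen hP j₀, hj₀]
      have l4 : qf (B*S*Bᴴ) v ≤ opNorm (B*S*Bᴴ) := by
        have h := hQbd v
        rw [hv1] at h
        have := abs_le.mp (by simpa using h)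
        linarith [this.2]
      have l5 := hQf v
      linarith
  · intro k
    set μ := hS.1.eigenvalues with hμ
    set σ := Tuple.sort μ with hσ
    set r := k.rev with hr
    have hrval : (r : ℕ) = d - (k.val + 1) := rfl
    set s : Finset (Fin d) := Finset.image σ (Finset.Ici r) with hs
    have hcard : s.card = d - (r : ℕ) := by
      rw [hs, Finset.card_image_of_injective _ σ.injective, Fin.card_Ici]
    have hbound : ∀ j ∈ s, kthLargest μ k ≤ μ j := by
      intro j hj
      obtain ⟨i, hi, rfl⟩ := Finset.mem_image.mp hj
      exact Tuple.monotone_sort μ (Finset.mem_Ici.mp hi)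
    set W₀ := Submodule.span ℂ (hS.1.eigenvectorBasis '' ↑s) with hW₀
    have hrankW₀ : Module.finrank ℂ W₀ = k.val + 1 := by
      rw [hW₀, finrank_span_eigen hS.1 s, hcard]
      have := k.isLt
      omega
    set TU := (Matrix.toEuclideanCLM (𝕜 := ℂ) U).toLinearMap with hTU
    set TUc := (Matrix.toEuclideanCLM (𝕜 := ℂ) Uᴴ).toLinearMap with hTUc
    set W := Submodule.map TU W₀ with hW
    have hWback : Submodule.map TUc W = W₀ := by
      rw [hW, ← Submodule.map_comp]
      have : TUc ∘ₗ TU = LinearMap.id := LinearMap.ext fun x => conjT_apply_apply hU x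
      rw [this, Submodule.map_id]
    have hrank : k.val + 1 ≤ Module.finrank ℂ W := by
      calc k.val + 1 = Module.finrank ℂ W₀ := hrankW₀.symm
        _ = Module.finrank ℂ (Submodule.map TUc W) := by rw [hWback]
        _ ≤ Module.finrank ℂ W := Submodule.finrank_map_le _ _
    set c : ℝ := kthLargest μ k / 2 - opNorm (B*S*Bᴴ) with hc
    have hq : ∀ x ∈ W, c * ‖x‖^2 ≤ qf (A*S*Aᴴ) x := by
      intro x hx
      obtain ⟨y, hy, rfl⟩ := hx
      have hyx : Matrix.toEuclideanCLM (𝕜 := ℂ) Uᴴ (TU y) = y := conjT_apply_apply hU y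
      have hnorm : ‖y‖^2 = ‖TU y‖^2 := by
        conv_lhs => rw [← hyx]
        exact norm_sq_conjT hU (TU y)
      have q1 : kthLargest μ k * ‖TU y‖^2 ≤ qf (U*S*Uᴴ) (TU y) := by
        rw [qf_conj, hyx, ← hnorm]
        exact qf_ge_on_span hS.1 s _ hbound hy
      have q2 : 0 ≤ qf (V*S*Vᴴ) (TU y) := by
        rw [qf_conj]
        exact qf_nonneg_of_psd hS _
      have q3 := hQf (TU y)
      have q4 := abs_le.mp (hQbd (TU y))
      have q5 : c * ‖TU y‖^2
          = (kthLargest μ k * ‖TU y‖^2)/2 - opNorm (B*S*Bᴴ) * ‖TU y‖^2 := by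
        rw [hc]; ring
      have goal' : c * ‖TU y‖ ^ 2 ≤ qf (A*S*Aᴴ) (TU y) := by
        rw [q5]
        linarith [q1, q2, q3, q4.2]
      exact goal'
    have := kthLargest_ge hP k c W hrank hq
    rw [hc] at this
    linarith
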